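/- Let (G_1, G_2) be a pair of random graphs on [n] with ground-truth matching π*, let k be a positive integer, and define ξ := max_{1 ≤ d ≤ n} max_{(M,μ) ∈ M(d)} P(f(μ) ≥ kd)^{1/d}. Then the probability that there exists a matching (M, μ) such that the intersection graph G_1 ∧_μ G_2 has minimum degree at least k and μ(i) ≠ π*(i) for some i ∈ M is at most e^{n²ξ} − 1. -/

import Mathlib

open Finset MeasureTheory

/-- `f(μ)` for random graphs given by adjacency indicators `A`, `B` at sample point `ω`:
the sum, over vertices of `M` incorrectly matched by `μ`, of the degree in the
intersection graph `G₁ ∧_μ G₂`. -/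
def fvalW {Ω : Type} {n : ℕ} (A B : Ω → Fin n → Fin n → Bool) (πs : Equiv.Perm (Fin n))
    (M : Finset (Fin n)) (μ : Fin n → Fin n) (ω : Ω) : ℕ :=
  ∑ i ∈ M.filter (fun i => μ i ≠ πs i),
    (M.filter (fun j => j ≠ i ∧ A ω i j = true ∧ B ω (μ i) (μ j) = true)).card

open scoped Classical

/-- A "good" (canonical π*-maximal) matching: injective on `M`, maximal, and equal to `πs`
outside `M`. -/
def IsGood {n : ℕ} (πs : Equiv.Perm (Fin n)) (p : Finset (Fin n) × (Fin n → Fin n)) : Prop :=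
  Set.InjOn p.2 ↑p.1 ∧ (∀ i, i ∈ p.1 ∨ πs i ∈ p.1.image p.2) ∧ ∀ i ∉ p.1, p.2 i = πs i

/-- The set of mismatched vertices. -/
def errs {n : ℕ} (πs : Equiv.Perm (Fin n)) (p : Finset (Fin n) × (Fin n → Fin n)) :
    Finset (Fin n) := p.1.filter (fun i => p.2 i ≠ πs i)

lemma mem_good_iff {n : ℕ} (πs : Equiv.Perm (Fin n)) (p : Finset (Fin n) × (Fin n → Fin n))
    (hp : IsGood πs p) (i : Fin n) :
    i ∈ p.1 ↔ i ∈ errs πs p ∨ πs i ∉ (errs πs p).image p.2 := by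
  obtain ⟨hinj, hmax, -⟩ := hp
  constructor
  · intro hi
    by_cases he : i ∈ errs πs p
    · exact Or.inl he
    · refine Or.inr ?_
      intro hmem
      obtain ⟨j, hj, hji⟩ := Finset.mem_image.mp hmem
      have hij : p.2 i = πs i := by
        by_contra h
        exact he (Finset.mem_filter.mpr ⟨hi, h⟩)
      have hjM : j ∈ p.1 := (Finset.mem_filter.mp hj).1
      have : i = j := hinj hi hjM (by rw [hij, hji])
      subst this
      exact (Finset.mem_filter.mp hj).2 hij
  · rintro (he | hni)
    · exact (Finset.mem_filter.mp he).1
    · rcases hmax i with hi | hi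
      · exact hi
      · obtain ⟨j, hj, hji⟩ := Finset.mem_image.mp hi
        by_cases hje : j ∈ errs πs p
        · exact absurd (Finset.mem_image.mpr ⟨j, hje, hji⟩) hni
        · have hjc : p.2 j = πs j := by
            by_contra h
            exact hje (Finset.mem_filter.mpr ⟨hj, h⟩)
          have : j = i := πs.injective (by rw [← hjc, hji])
          exact this ▸ hj

lemma count_good {n : ℕ} (πs : Equiv.Perm (Fin n)) (d : ℕ) :
    (Finset.univ.filter (fun p : Finset (Fin n) × (Fin n → Fin n) =>
      IsGood πs p ∧ (errs πs p).card = d)).card ≤ Nat.choose (n ^ 2) d := by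
  classical
  have hcard : ((Finset.univ : Finset (Fin n × Fin n)).powersetCard d).card
      = Nat.choose (n ^ 2) d := by
    rw [Finset.card_powersetCard]
    congr 1
    simp [sq]
  rw [← hcard]
  apply Finset.card_le_card_of_injOn
    (fun p => (errs πs p).image (fun i => (i, p.2 i)))
  · intro p hp
    rw [Finset.mem_coe, Finset.mem_powersetCard]
    refine ⟨Finset.subset_univ _, ?_⟩
    rw [Finset.card_image_of_injOn (fun i _ j _ h => (Prod.mk.injEq _ _ _ _).mp h |>.1)]
    exact (Finset.mem_filter.mp hp).2.2
  · intro p hp q hq heq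
    replace heq : (errs πs p).image (fun i => (i, p.2 i))
        = (errs πs q).image (fun i => (i, q.2 i)) := heq
    simp only [Finset.mem_coe, Finset.mem_filter] at hp hq
    have hpg := hp.2.1
    have hqg := hq.2.1
    -- same error sets
    have hT : errs πs p = errs πs q := by
      have h1 : ((errs πs p).image (fun i => (i, p.2 i))).image Prod.fst = errs πs p := by
        rw [Finset.image_image]; exact Finset.image_id'
      have h2 : ((errs πs q).image (fun i => (i, q.2 i))).image Prod.fst = errs πs q := by
        rw [Finset.image_image]; exact Finset.image_id'
      rw [← h1, ← h2, heq]
    -- same μ on error set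
    have hμT : ∀ i ∈ errs πs p, p.2 i = q.2 i := by
      intro i hi
      have : (i, p.2 i) ∈ (errs πs q).image (fun i => (i, q.2 i)) := by
        rw [← heq]; exact Finset.mem_image_of_mem _ hi
      obtain ⟨j, -, hj⟩ := Finset.mem_image.mp this
      obtain ⟨h1, h2⟩ := Prod.mk.injEq _ _ _ _ |>.mp hj
      rw [← h2, h1]
    -- μ equal everywhere
    have hμ : p.2 = q.2 := by
      funext i
      by_cases hi : i ∈ errs πs p
      · exact hμT i hi
      · have hpi : p.2 i = πs i := by
          by_cases hm : i ∈ p.1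
          · by_contra h
            exact hi (Finset.mem_filter.mpr ⟨hm, h⟩)
          · exact hpg.2.2 i hm
        have hqi : q.2 i = πs i := by
          by_cases hm : i ∈ q.1
          · by_contra h
            exact hi (hT ▸ Finset.mem_filter.mpr ⟨hm, h⟩)
          · exact hqg.2.2 i hm
        rw [hpi, hqi]
    -- same image of error set
    have himg : (errs πs p).image p.2 = (errs πs q).image q.2 := by
      rw [hT, hμ]
    -- same vertex sets
    have hM : p.1 = q.1 := by
      ext i
      rw [mem_good_iff πs p hpg, mem_good_iff πs q hqg, hT, hμ]
    exact Prod.ext hM hμ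

/-- Extension of any injective matching to a canonical maximal one, keeping values on `M`
and the same error set. -/
lemma extend_good {n : ℕ} (πs : Equiv.Perm (Fin n)) (M : Finset (Fin n)) (μ : Fin n → Fin n)
    (hinj : Set.InjOn μ ↑M) :
    ∃ p : Finset (Fin n) × (Fin n → Fin n), IsGood πs p ∧
      errs πs p = M.filter (fun i => μ i ≠ πs i) ∧ M ⊆ p.1 ∧ ∀ i ∈ M, p.2 i = μ i := by
  classical
  refine ⟨(M ∪ Finset.univ.filter (fun i => i ∉ M ∧ πs i ∉ M.image μ),
    fun i => if i ∈ M then μ i else πs i), ⟨?_, ?_, ?_⟩, ?_, ?_, ?_⟩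
  · -- InjOn
    intro i hi j hj hij
    simp only [Finset.coe_union, Set.mem_union, Finset.mem_coe, Finset.coe_filter,
      Set.mem_setOf_eq, Finset.mem_univ, true_and] at hi hj
    by_cases hiM : i ∈ M <;> by_cases hjM : j ∈ M <;>
      simp only [hiM, hjM, if_pos, if_neg, if_true, if_false] at hij
    · exact hinj hiM hjM hij
    · exfalso
      rcases hj with hj | hj
      · exact hjM hj
      · exact hj.2 (hij ▸ Finset.mem_image_of_mem μ hiM)
    · exfalso
      rcases hi with hi | hi
      · exact hiM hi
      · exact hi.2 (hij ▸ Finset.mem_image_of_mem μ hjM)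
    · exact πs.injective hij
  · -- maximality
    intro i
    by_cases hi : i ∈ M ∪ Finset.univ.filter (fun i => i ∉ M ∧ πs i ∉ M.image μ)
    · exact Or.inl hi
    · refine Or.inr ?_
      simp only [Finset.mem_union, Finset.mem_filter, Finset.mem_univ, true_and,
        not_or, not_and, not_not] at hi
      have h2 := hi.2 hi.1
      obtain ⟨j, hj, hji⟩ := Finset.mem_image.mp h2
      refine Finset.mem_image.mpr ⟨j, Finset.mem_union_left _ hj, ?_⟩
      simp only [hj, if_pos]
      exact hji
  · -- canonical outside
    intro i hi
    have hiM : i ∉ M := fun h => hi (Finset.mem_union_left _ h)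
    simp [hiM]
  · -- error set
    ext i
    simp only [errs, Finset.mem_filter, Finset.mem_union, Finset.mem_univ, true_and]
    constructor
    · rintro ⟨hi | hi, hne⟩
      · refine ⟨hi, ?_⟩; simpa [hi] using hne
      · exfalso
        have := hi.1
        simp [this] at hne
    · rintro ⟨hi, hne⟩
      exact ⟨Or.inl hi, by simpa [hi] using hne⟩
  · exact Finset.subset_union_left
  · intro i hi; simp [hi]

lemma range_erase_zero (n : ℕ) : (Finset.range (n + 1)).erase 0 = Finset.Icc 1 n := by
  ext i
  simp only [Finset.mem_erase, Finset.mem_range, Finset.mem_Icc]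
  omega

/-- if `ξ` satisfies `P(f(μ) ≥ kd) ≤ ξ^d` for every `π*`-maximal matching with
`d` errors (`1 ≤ d ≤ n`), i.e. `ξ` dominates the quantity
`max_{1≤d≤n} max_{(M,μ)∈M(d)} P(f(μ) ≥ kd)^{1/d}`, then the probability that some matching
`(M, μ)` makes the intersection graph have minimum degree `≥ k` while mismatching some
vertex is at most `e^{n²ξ} − 1`. -/
theorem statement2 {Ω : Type} [MeasurableSpace Ω] (ℙ : Measure Ω) [IsProbabilityMeasure ℙ]
    {n : ℕ} (k : ℕ) (hk : 1 ≤ k) (πs : Equiv.Perm (Fin n))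
    (A B : Ω → Fin n → Fin n → Bool) (ξ : ℝ) (hξ0 : 0 ≤ ξ)
    (hξ : ∀ d : ℕ, 1 ≤ d → d ≤ n →
      ∀ (M : Finset (Fin n)) (μ : Fin n → Fin n), Set.InjOn μ ↑M →
        (∀ i : Fin n, i ∈ M ∨ πs i ∈ M.image μ) →
        (M.filter (fun i => μ i ≠ πs i)).card = d →
        (ℙ {ω | k * d ≤ fvalW A B πs M μ ω}).toReal ≤ ξ ^ d) :
    (ℙ {ω | ∃ (M : Finset (Fin n)) (μ : Fin n → Fin n), Set.InjOn μ ↑M ∧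
        (∀ i ∈ M, k ≤ (M.filter
          (fun j => j ≠ i ∧ A ω i j = true ∧ B ω (μ i) (μ j) = true)).card) ∧
        ∃ i ∈ M, μ i ≠ πs i}).toReal
      ≤ Real.exp ((n : ℝ) ^ 2 * ξ) - 1 := by
  classical
  set S : Finset (Finset (Fin n) × (Fin n → Fin n)) :=
    Finset.univ.filter (fun p => IsGood πs p ∧ 1 ≤ (errs πs p).card) with hS
  set E : Finset (Fin n) × (Fin n → Fin n) → Set Ω :=
    fun p => {ω | k * (errs πs p).card ≤ fvalW A B πs p.1 p.2 ω} with hE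
  -- the bad event is covered by the union of the events E p, p ∈ S
  have hcover : {ω | ∃ (M : Finset (Fin n)) (μ : Fin n → Fin n), Set.InjOn μ ↑M ∧
        (∀ i ∈ M, k ≤ (M.filter
          (fun j => j ≠ i ∧ A ω i j = true ∧ B ω (μ i) (μ j) = true)).card) ∧
        ∃ i ∈ M, μ i ≠ πs i} ⊆ ⋃ p ∈ S, E p := by
    intro ω hω
    obtain ⟨M, μ, hinj, hdeg, i0, hi0, hne0⟩ := hω
    obtain ⟨p, hgood, herrs, hMsub, hμeq⟩ := extend_good πs M μ hinj
    have herr_mem : i0 ∈ errs πs p := by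
      rw [herrs]; exact Finset.mem_filter.mpr ⟨hi0, hne0⟩
    have hd1 : 1 ≤ (errs πs p).card := Finset.card_pos.mpr ⟨i0, herr_mem⟩
    refine Set.mem_biUnion (Finset.mem_filter.mpr ⟨Finset.mem_univ _, hgood, hd1⟩) ?_
    -- show k * d ≤ fvalW for p
    show k * (errs πs p).card ≤ fvalW A B πs p.1 p.2 ω
    have hkey : ∀ i ∈ errs πs p,
        k ≤ (p.1.filter (fun j => j ≠ i ∧ A ω i j = true ∧
          B ω (p.2 i) (p.2 j) = true)).card := by
      intro i hi
      have hiM : i ∈ M := by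
        rw [herrs] at hi; exact (Finset.mem_filter.mp hi).1
      refine le_trans (hdeg i hiM) (Finset.card_le_card ?_)
      intro j hj
      obtain ⟨hjM, hji, hA, hB⟩ := Finset.mem_filter.mp hj |>.imp id (fun h => h)
      refine Finset.mem_filter.mpr ⟨hMsub hjM, hji, hA, ?_⟩
      rwa [hμeq i hiM, hμeq j hjM]
    calc k * (errs πs p).card = ∑ _i ∈ errs πs p, k := by
          rw [Finset.sum_const, smul_eq_mul, mul_comm]
      _ ≤ ∑ i ∈ errs πs p,
            (p.1.filter (fun j => j ≠ i ∧ A ω i j = true ∧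
              B ω (p.2 i) (p.2 j) = true)).card := Finset.sum_le_sum hkey
      _ = fvalW A B πs p.1 p.2 ω := rfl
  -- union bound
  have hub : ℙ {ω | ∃ (M : Finset (Fin n)) (μ : Fin n → Fin n), Set.InjOn μ ↑M ∧
        (∀ i ∈ M, k ≤ (M.filter
          (fun j => j ≠ i ∧ A ω i j = true ∧ B ω (μ i) (μ j) = true)).card) ∧
        ∃ i ∈ M, μ i ≠ πs i} ≤ ∑ p ∈ S, ℙ (E p) :=
    le_trans (measure_mono hcover) (measure_biUnion_finset_le S E)
  have hfin : ∑ p ∈ S, ℙ (E p) ≠ ⊤ := by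
    refine (lt_of_le_of_lt (Finset.sum_le_sum fun p _ => prob_le_one) ?_).ne
    simp only [Finset.sum_const, nsmul_eq_mul, mul_one]
    exact ENNReal.natCast_lt_top _
  have step1 : (ℙ {ω | ∃ (M : Finset (Fin n)) (μ : Fin n → Fin n), Set.InjOn μ ↑M ∧
        (∀ i ∈ M, k ≤ (M.filter
          (fun j => j ≠ i ∧ A ω i j = true ∧ B ω (μ i) (μ j) = true)).card) ∧
        ∃ i ∈ M, μ i ≠ πs i}).toReal ≤ ∑ p ∈ S, (ℙ (E p)).toReal := by
    rw [← ENNReal.toReal_sum (fun p _ => (lt_of_le_of_lt prob_le_one ENNReal.one_lt_top).ne)]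
    exact ENNReal.toReal_mono hfin hub
  refine le_trans step1 ?_
  -- bound each term
  have step2 : ∑ p ∈ S, (ℙ (E p)).toReal ≤ ∑ p ∈ S, ξ ^ (errs πs p).card := by
    apply Finset.sum_le_sum
    intro p hp
    obtain ⟨-, hgood, hd1⟩ := Finset.mem_filter.mp hp
    have hdn : (errs πs p).card ≤ n := by
      refine le_trans (Finset.card_le_card (Finset.filter_subset _ _)) ?_
      simpa using Finset.card_le_card (Finset.subset_univ p.1)
    exact hξ (errs πs p).card hd1 hdn p.1 p.2 hgood.1 hgood.2.1 rfl
  refine le_trans step2 ?_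
  -- regroup by number of errors
  have hmaps : ∀ p ∈ S, (errs πs p).card ∈ Finset.Icc 1 n := by
    intro p hp
    obtain ⟨-, -, hd1⟩ := Finset.mem_filter.mp hp
    refine Finset.mem_Icc.mpr ⟨hd1, ?_⟩
    refine le_trans (Finset.card_le_card (Finset.filter_subset _ _)) ?_
    simpa using Finset.card_le_card (Finset.subset_univ p.1)
  have hregroup : ∑ p ∈ S, ξ ^ (errs πs p).card
      = ∑ d ∈ Finset.Icc 1 n, ∑ p ∈ S.filter (fun p => (errs πs p).card = d), ξ ^ d := by
    rw [← Finset.sum_fiberwise_of_maps_to hmaps]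
    apply Finset.sum_congr rfl
    intro d _
    apply Finset.sum_congr rfl
    intro p hp
    rw [(Finset.mem_filter.mp hp).2]
  rw [hregroup]
  -- bound the fiber cardinalities
  have hfiber : ∀ d ∈ Finset.Icc 1 n,
      ∑ p ∈ S.filter (fun p => (errs πs p).card = d), ξ ^ d
        ≤ ((n : ℝ) ^ 2 * ξ) ^ d / d.factorial := by
    intro d hd
    rw [Finset.sum_const, nsmul_eq_mul]
    have hcard : ((S.filter (fun p => (errs πs p).card = d)).card : ℝ)
        ≤ Nat.choose (n ^ 2) d := by
      have hsub : S.filter (fun p => (errs πs p).card = d) ⊆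
          Finset.univ.filter (fun p => IsGood πs p ∧ (errs πs p).card = d) := by
        intro p hp
        obtain ⟨hpS, hpd⟩ := Finset.mem_filter.mp hp
        obtain ⟨-, hgood, -⟩ := Finset.mem_filter.mp hpS
        exact Finset.mem_filter.mpr ⟨Finset.mem_univ _, hgood, hpd⟩
      exact_mod_cast le_trans (Nat.cast_le.mpr (Finset.card_le_card hsub))
        (Nat.cast_le.mpr (count_good πs d))
    have hchoose : (Nat.choose (n ^ 2) d : ℝ) ≤ ((n : ℝ) ^ 2) ^ d / d.factorial := by
      have := Nat.choose_le_pow_div (α := ℝ) d (n ^ 2)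
      push_cast at this ⊢
      exact this
    calc ((S.filter (fun p => (errs πs p).card = d)).card : ℝ) * ξ ^ d
        ≤ (Nat.choose (n ^ 2) d : ℝ) * ξ ^ d := by
          apply mul_le_mul_of_nonneg_right hcard (by positivity)
      _ ≤ (((n : ℝ) ^ 2) ^ d / d.factorial) * ξ ^ d := by
          apply mul_le_mul_of_nonneg_right hchoose (by positivity)
      _ = ((n : ℝ) ^ 2 * ξ) ^ d / d.factorial := by
          rw [mul_pow]; ring
  refine le_trans (Finset.sum_le_sum hfiber) ?_
  -- final: truncated exponential sum
  set x : ℝ := (n : ℝ) ^ 2 * ξ with hx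
  have hx0 : 0 ≤ x := by positivity
  have hsum : ∑ d ∈ Finset.Icc 1 n, x ^ d / d.factorial
      = (∑ d ∈ Finset.range (n + 1), x ^ d / d.factorial) - 1 := by
    rw [← range_erase_zero n]
    rw [← Finset.add_sum_erase _ _ (Finset.mem_range.mpr (Nat.succ_pos n))]
    simp
  rw [hsum]
  have := Real.sum_le_exp_of_nonneg hx0 (n + 1)
  linarith
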